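/- Let N ≥ 1 and k, r ∈ ℕ. For each j ∈ {1,…,k} let c_j ∈ ℂ satisfy c_j^N = 1 and let a_{j,1},…,a_{j,r} ∈ ℕ. In the polynomial ring ℂ[x_1,…,x_k, y_1,…,y_r] let I be the ideal generated by the polynomials x_j − c_j · y_1^{a_{j,1}} ⋯ y_r^{a_{j,r}} for j ∈ {1,…,k}, together with the polynomials y_i^N − 1 for i ∈ {1,…,r}. Then a polynomial p ∈ ℂ[x_1,…,x_k, y_1,…,y_r] belongs to I if and only if p vanishes at every point (x, y) ∈ ℂ^{k+r} satisfying y_i^N = 1 for all i and x_j = c_j · y_1^{a_{j,1}} ⋯ y_r^{a_{j,r}} for all j. In other words, I equals the vanishing ideal of its variety. -/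

import Mathlib

open MvPolynomial

/-- The submonoid of points whose coordinates are N-th roots of unity. -/
def gridSubmonoid (N r : ℕ) : Submonoid (Fin r → ℂ) where
  carrier := {y | ∀ i, y i ^ N = 1}
  one_mem' := by intro i; simp
  mul_mem' := by
    intro g h hg hh i
    rw [Pi.mul_apply, mul_pow, hg i, hh i, one_mul]

/-- The character on the grid given by an exponent vector. -/
def gridChar (N r : ℕ) (e : Fin r →₀ ℕ) : gridSubmonoid N r →* ℂ where
  toFun g := ∏ i, (g : Fin r → ℂ) i ^ e i
  map_one' := by simp
  map_mul' g h := by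
    simp [mul_pow, Finset.prod_mul_distrib]

lemma gridChar_inj (N r : ℕ) (hN : 1 ≤ N) {e e' : Fin r →₀ ℕ}
    (he : ∀ i, e i < N) (he' : ∀ i, e' i < N)
    (h : gridChar N r e = gridChar N r e') : e = e' := by
  have hζ := Complex.isPrimitiveRoot_exp N (by omega)
  set ζ := Complex.exp (2 * Real.pi * Complex.I / N)
  ext i
  have hmem : Function.update (1 : Fin r → ℂ) i ζ ∈ gridSubmonoid N r := by
    intro j
    rcases eq_or_ne j i with rfl | hj
    · simp [hζ.pow_eq_one]
    · simp [Function.update_of_ne hj]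
  have hval : ∀ d : Fin r →₀ ℕ,
      gridChar N r d ⟨_, hmem⟩ = ζ ^ d i := by
    intro d
    show (∏ j, Function.update (1 : Fin r → ℂ) i ζ j ^ d j) = ζ ^ d i
    rw [Finset.prod_eq_single i]
    · simp
    · intro j _ hj; simp [Function.update_of_ne hj]
    · simp
  have := congrArg (fun φ : gridSubmonoid N r →* ℂ => φ ⟨_, hmem⟩) h
  simp only [hval] at this
  exact hζ.pow_inj (he i) (he' i) this

lemma eval_zero_of_mem_span {σ : Type*} (S : Set (MvPolynomial σ ℂ)) (y : σ → ℂ)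
    (hS : ∀ s ∈ S, eval y s = 0) {p : MvPolynomial σ ℂ}
    (hp : p ∈ Ideal.span S) : eval y p = 0 := by
  induction hp using Submodule.span_induction with
  | mem s hs => exact hS s hs
  | zero => simp
  | add s t _ _ hs ht => simp [hs, ht]
  | smul c s _ hs => simp [hs]

lemma grid_mem (N : ℕ) (hN : 1 ≤ N) (r : ℕ) (q : MvPolynomial (Fin r) ℂ)
    (hq : ∀ y : Fin r → ℂ, (∀ i, y i ^ N = 1) → eval y q = 0) :
    q ∈ Ideal.span (Set.range fun i : Fin r => (X i : MvPolynomial (Fin r) ℂ) ^ N - 1) := by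
  classical
  set J := Ideal.span (Set.range fun i : Fin r => (X i : MvPolynomial (Fin r) ℂ) ^ N - 1)
    with hJ
  have hXN : ∀ i : Fin r, (Ideal.Quotient.mk J (X i)) ^ N = 1 := by
    intro i
    have hmem : (X i : MvPolynomial (Fin r) ℂ) ^ N - 1 ∈ J :=
      Ideal.subset_span ⟨i, rfl⟩
    have := Ideal.Quotient.eq.2 hmem
    rw [← map_pow]
    simpa using this
  set f : (Fin r →₀ ℕ) → (Fin r →₀ ℕ) := fun e => e.mapRange (· % N) (Nat.zero_mod N) with hf
  have hmon : ∀ (e : Fin r →₀ ℕ) (cc : ℂ),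
      Ideal.Quotient.mk J (monomial e cc) = Ideal.Quotient.mk J (monomial (f e) cc) := by
    intro e cc
    rw [monomial_eq, monomial_eq,
      Finsupp.prod_fintype _ _ (fun i => pow_zero _),
      Finsupp.prod_fintype _ _ (fun i => pow_zero _)]
    simp only [map_mul, map_prod, map_pow]
    congr 1
    apply Finset.prod_congr rfl
    intro i _
    rw [hf, Finsupp.mapRange_apply]
    conv_lhs => rw [← Nat.div_add_mod (e i) N]
    rw [pow_add, pow_mul, hXN, one_pow, one_mul]
  set q' : MvPolynomial (Fin r) ℂ := ∑ e ∈ q.support, monomial (f e) (coeff e q) with hq'def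
  have hqq' : Ideal.Quotient.mk J q = Ideal.Quotient.mk J q' := by
    conv_lhs => rw [← support_sum_monomial_coeff q]
    rw [map_sum, hq'def, map_sum]
    exact Finset.sum_congr rfl fun e _ => hmon e _
  have hsub : q - q' ∈ J := Ideal.Quotient.eq.1 hqq'
  have hgen : ∀ y : Fin r → ℂ, (∀ i, y i ^ N = 1) →
      ∀ s ∈ (Set.range fun i : Fin r => (X i : MvPolynomial (Fin r) ℂ) ^ N - 1), eval y s = 0 := by
    rintro y hy s ⟨i, rfl⟩
    simp [hy i]
  have hq'eval : ∀ y : Fin r → ℂ, (∀ i, y i ^ N = 1) → eval y q' = 0 := by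
    intro y hy
    have h1 : eval y (q - q') = 0 := eval_zero_of_mem_span _ y (hgen y hy) hsub
    rw [map_sub] at h1
    rw [hq y hy, zero_sub, neg_eq_zero] at h1
    exact h1
  have hbound : ∀ e ∈ q'.support, ∀ i, e i < N := by
    intro e he i
    have h2 := MvPolynomial.support_sum
      (s := q.support) (f := fun d => monomial (f d) (coeff d q)) he
    obtain ⟨d, _, hmem⟩ := Finset.mem_biUnion.1 h2
    have : e = f d := Finset.mem_singleton.1 (support_monomial_subset hmem)
    rw [this, hf, Finsupp.mapRange_apply]
    exact Nat.mod_lt _ (by omega)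
  have li : LinearIndependent ℂ
      (fun e : {e : Fin r →₀ ℕ // e ∈ q'.support} =>
        ((gridChar N r e.1 : gridSubmonoid N r →* ℂ) : gridSubmonoid N r → ℂ)) := by
    apply (linearIndependent_monoidHom (gridSubmonoid N r) ℂ).comp
    intro e e' h
    exact Subtype.ext (gridChar_inj N r hN (hbound e.1 e.2) (hbound e'.1 e'.2) h)
  have hcoeff : ∀ e : {e : Fin r →₀ ℕ // e ∈ q'.support}, coeff e.1 q' = 0 := by
    have hsum : ∑ e : {e : Fin r →₀ ℕ // e ∈ q'.support},
        coeff e.1 q' • ((gridChar N r e.1 : gridSubmonoid N r →* ℂ) :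
          gridSubmonoid N r → ℂ) = 0 := by
      funext g
      simp only [Finset.sum_apply, Pi.zero_apply, Pi.smul_apply, smul_eq_mul]
      have hval : ∀ e : Fin r →₀ ℕ,
          gridChar N r e g = ∏ i, (g : Fin r → ℂ) i ^ e i := fun _ => rfl
      simp only [hval]
      rw [Finset.sum_coe_sort q'.support
        (fun e => coeff e q' * ∏ i, (g : Fin r → ℂ) i ^ e i), ← eval_eq']
      exact hq'eval _ g.2
    intro e
    exact linearIndependent_iff'.1 li Finset.univ _ hsum e (Finset.mem_univ e)
  have hq'0 : q' = 0 := by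
    ext d
    rw [coeff_zero]
    by_cases hd : d ∈ q'.support
    · exact hcoeff ⟨d, hd⟩
    · exact notMem_support_iff.1 hd
  rw [hq'0, sub_zero] at hsub
  exact hsub

lemma aeval_eq_eval' {σ : Type*} (y : σ → ℂ) (p : MvPolynomial σ ℂ) :
    MvPolynomial.aeval y p = MvPolynomial.eval y p := by
  rw [← MvPolynomial.coe_aeval_eq_eval]
  rfl

theorem stmt_7 (N : ℕ) (hN : 1 ≤ N) (k r : ℕ) (c : Fin k → ℂ) (hc : ∀ j, c j ^ N = 1)
    (a : Fin k → Fin r → ℕ) (p : MvPolynomial (Fin k ⊕ Fin r) ℂ) :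
    p ∈ Ideal.span
        ((Set.range fun j : Fin k =>
            MvPolynomial.X (Sum.inl j) -
              MvPolynomial.C (c j) * ∏ i, MvPolynomial.X (Sum.inr i) ^ a j i) ∪
          (Set.range fun i : Fin r =>
            (MvPolynomial.X (Sum.inr i) : MvPolynomial (Fin k ⊕ Fin r) ℂ) ^ N - 1)) ↔
      ∀ (x : Fin k → ℂ) (y : Fin r → ℂ), (∀ i, y i ^ N = 1) →
        (∀ j, x j = c j * ∏ i, y i ^ a j i) →
        MvPolynomial.eval (Sum.elim x y) p = 0 := by
  classical
  set S : Set (MvPolynomial (Fin k ⊕ Fin r) ℂ) :=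
    (Set.range fun j : Fin k =>
        MvPolynomial.X (Sum.inl j) -
          MvPolynomial.C (c j) * ∏ i, MvPolynomial.X (Sum.inr i) ^ a j i) ∪
      (Set.range fun i : Fin r =>
        (MvPolynomial.X (Sum.inr i) : MvPolynomial (Fin k ⊕ Fin r) ℂ) ^ N - 1) with hS
  set I : Ideal (MvPolynomial (Fin k ⊕ Fin r) ℂ) := Ideal.span S with hI
  constructor
  · intro hp x y hy hx
    refine eval_zero_of_mem_span S (Sum.elim x y) ?_ hp
    rintro s (⟨j, rfl⟩ | ⟨i, rfl⟩)
    · simp [hx j]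
    · simp [hy i]
  · intro H
    set g' : (Fin k ⊕ Fin r) → MvPolynomial (Fin r) ℂ :=
      Sum.elim (fun j => MvPolynomial.C (c j) * ∏ i, MvPolynomial.X i ^ a j i)
        (fun i => MvPolynomial.X i) with hg'
    set q : MvPolynomial (Fin r) ℂ := MvPolynomial.aeval g' p with hqdef
    -- key congruence mod I
    have hXgen : ∀ j : Fin k,
        MvPolynomial.X (Sum.inl j) -
          MvPolynomial.C (c j) * ∏ i, MvPolynomial.X (Sum.inr i) ^ a j i ∈ I :=
      fun j => Ideal.subset_span (Or.inl ⟨j, rfl⟩)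
    have key : Ideal.Quotient.mk I p =
        Ideal.Quotient.mk I (MvPolynomial.rename Sum.inr q) := by
      have hφ : (Ideal.Quotient.mkₐ ℂ I).comp
          ((MvPolynomial.rename Sum.inr).comp (MvPolynomial.aeval g')) =
          Ideal.Quotient.mkₐ ℂ I := by
        apply MvPolynomial.algHom_ext
        intro v
        cases v with
        | inl j =>
          simp only [AlgHom.comp_apply, MvPolynomial.aeval_X, hg', Sum.elim_inl,
            Ideal.Quotient.mkₐ_eq_mk]
          rw [map_mul, MvPolynomial.rename_C, map_prod]
          simp only [map_pow, MvPolynomial.rename_X]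
          exact (Ideal.Quotient.eq.2 (hXgen j)).symm
        | inr i =>
          simp [hg']
      have := DFunLike.congr_fun hφ p
      simpa [hqdef] using this.symm
    -- q vanishes on the grid
    have hqgrid : ∀ y : Fin r → ℂ, (∀ i, y i ^ N = 1) → MvPolynomial.eval y q = 0 := by
      intro y hy
      set x : Fin k → ℂ := fun j => c j * ∏ i, y i ^ a j i with hx
      have hcomp : (MvPolynomial.aeval y : MvPolynomial (Fin r) ℂ →ₐ[ℂ] ℂ).comp
          (MvPolynomial.aeval g') = MvPolynomial.aeval (Sum.elim x y) := by
        apply MvPolynomial.algHom_ext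
        intro v
        cases v with
        | inl j => simp [hg', hx]
        | inr i => simp [hg']
      have h1 := DFunLike.congr_fun hcomp p
      simp only [AlgHom.comp_apply] at h1
      have h2 : MvPolynomial.aeval (Sum.elim x y) p = 0 := by
        rw [aeval_eq_eval']
        exact H x y hy (fun j => rfl)
      rw [hqdef, ← aeval_eq_eval', h1, h2]
    have hqJ := grid_mem N hN r q hqgrid
    -- push into I
    have hrq : MvPolynomial.rename Sum.inr q ∈ I := by
      have hmap : MvPolynomial.rename Sum.inr q ∈ Ideal.map
          (MvPolynomial.rename (R := ℂ) Sum.inr :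
            MvPolynomial (Fin r) ℂ →ₐ[ℂ] MvPolynomial (Fin k ⊕ Fin r) ℂ).toRingHom
          (Ideal.span (Set.range fun i : Fin r =>
            (MvPolynomial.X i : MvPolynomial (Fin r) ℂ) ^ N - 1)) :=
        Ideal.mem_map_of_mem _ hqJ
      rw [Ideal.map_span] at hmap
      refine Ideal.span_le.2 ?_ hmap
      rintro s ⟨t, ⟨i, rfl⟩, rfl⟩
      apply Ideal.subset_span
      right
      exact ⟨i, by simp⟩
    rw [← Ideal.Quotient.eq_zero_iff_mem] at hrq ⊢
    rw [key, hrq]
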